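/- arXiv:1707.04074 — 2 statements merged into one kernel-verified Lean document; each statement's English description precedes it below -/
import Mathlib

section
/- In a bicategory B, suppose η : 𝟙 x ⟶ f ≫ u exhibits u as a left Kan extension of 𝟙 x along f, and this Kan extension is preserved by f (the pasting of η with f exhibits u ≫ f as a left Kan extension of f along f). Then there exist a counit ε : u ≫ f ⟶ 𝟙 a and the data of an adjunction f ⊣ u with unit η. -/
open CategoryTheory Bicategory
open scoped Bicategory

theorem stmt7 {B : Type*} [Bicategory B] {x a : B} (f : x ⟶ a) (u : a ⟶ x)
    (η : 𝟙 x ⟶ f ≫ u)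
    (hext : ∀ (k : a ⟶ x) (θ : 𝟙 x ⟶ f ≫ k), ∃! θ' : u ⟶ k, η ≫ f ◁ θ' = θ)
    (hpres : ∀ (k : a ⟶ a) (θ : f ⟶ f ≫ k),
      ∃! θ' : u ≫ f ⟶ k,
        (λ_ f).inv ≫ η ▷ f ≫ (α_ f u f).hom ≫ f ◁ θ' = θ) :
    ∃ adj : Bicategory.Adjunction f u, adj.unit = η := by
  let t : LeftExtension f (𝟙 x) := .mk u η
  have H : LeftExtension.IsKan t := LeftExtension.IsKan.mk
    (fun s => LeftExtension.homMk (hext s.extension s.unit).choose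
      (hext s.extension s.unit).choose_spec.1)
    (fun s τ => by
      ext
      exact (hext s.extension s.unit).choose_spec.2 τ.right (LeftExtension.w τ))
  have H' : LeftExtension.IsKan (t.whisker f) := LeftExtension.IsKan.mk
    (fun s => LeftExtension.homMk
      (hpres s.extension ((λ_ f).inv ≫ s.unit)).choose
      (by
        have h := (hpres s.extension ((λ_ f).inv ≫ s.unit)).choose_spec.1
        rw [← cancel_epi (λ_ f).inv]
        simp [t] at h ⊢
        exact h))
    (fun s τ => by
      ext
      refine (hpres s.extension ((λ_ f).inv ≫ s.unit)).choose_spec.2 τ.right ?_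
      have h := LeftExtension.w τ
      simp only [LeftExtension.whisker_unit] at h
      have h2 := congrArg (fun z => (λ_ f).inv ≫ z) h
      simp [t] at h2 ⊢
      exact h2)
  exact ⟨H.adjunction H', rfl⟩
end

section
/- Let F : X ⥤ A and U : A ⥤ X, and suppose η : 𝟭 X ⟶ F ⋙ U exhibits U as a left Kan extension of 𝟭 X along F preserved by F, with ε : U ⋙ F ⟶ 𝟭 A the induced counit. Then the second triangle identity holds: for every a : A, U.map (ε.app a) ∘ η.app (U.obj a) = 𝟙 (U.obj a). -/
open CategoryTheory

universe v₁ v₂ v₃ u₁ u₂ u₃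

/-- `η : H ⟶ F ⋙ L` exhibits `L` as a left Kan extension of `H` along `F`. -/
def IsLeftKanExt {X : Type u₁} {A : Type u₂} {B : Type u₃}
    [Category.{v₁} X] [Category.{v₂} A] [Category.{v₃} B]
    (F : X ⥤ A) (H : X ⥤ B) (L : A ⥤ B) (η : H ⟶ F ⋙ L) : Prop :=
  ∀ (K : A ⥤ B) (f : H ⟶ F ⋙ K), ∃! fs : L ⟶ K, η ≫ CategoryTheory.Functor.whiskerLeft F fs = f

theorem stmt11 {X : Type u₁} {A : Type u₂} [Category.{v₁} X] [Category.{v₂} A]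
    (F : X ⥤ A) (U : A ⥤ X) (η : 𝟭 X ⟶ F ⋙ U)
    (hext : IsLeftKanExt F (𝟭 X) U η)
    (hpres : IsLeftKanExt F F (U ⋙ F) (CategoryTheory.Functor.whiskerRight η F))
    (ε : U ⋙ F ⟶ 𝟭 A)
    (hε : ∀ x : X, F.map (η.app x) ≫ ε.app (F.obj x) = 𝟙 (F.obj x)) :
    ∀ a : A, η.app (U.obj a) ≫ U.map (ε.app a) = 𝟙 (U.obj a) := by
  intro a
  let σ : U ⟶ U :=
    { app := fun b => η.app (U.obj b) ≫ U.map (ε.app b)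
      naturality := by
        intro b c f
        have h1 := η.naturality (U.map f)
        have h2 := ε.naturality f
        simp only [Functor.id_map, Functor.comp_map] at h1 h2
        rw [← Category.assoc, h1, Category.assoc, ← U.map_comp, h2, U.map_comp,
          ← Category.assoc] }
  have hσ : η ≫ CategoryTheory.Functor.whiskerLeft F σ = η := by
    ext x
    have hnat := η.naturality (η.app x)
    simp only [Functor.id_map, Functor.id_obj, Functor.comp_obj, Functor.comp_map] at hnat
    simp only [NatTrans.comp_app, Functor.whiskerLeft_app, σ]
    rw [← Category.assoc, hnat, Category.assoc, ← U.map_comp, hε x, U.map_id, Category.comp_id]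
  have hid : η ≫ CategoryTheory.Functor.whiskerLeft F (𝟙 U) = η := by
    ext x; simp
  obtain ⟨fs, _, huniq⟩ := hext U η
  have heq : σ = 𝟙 U := (huniq σ hσ).trans (huniq (𝟙 U) hid).symm
  have := congrArg (fun t => NatTrans.app t a) heq
  simpa [σ] using this
end
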